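/- Let f ∈ BMO^{r'}(μ) with r ∈ (1,∞) and 1/r + 1/r' = 1. Then the functional ℓ(g) = ∫ f·g dμ, initially defined on finite linear combinations of (1,r)-atoms, extends to a bounded linear functional on H^{1,r}(μ) with operator norm at most ‖f‖_{BMO^{r'}(μ)}. In particular, for any (1,r)-atom a, |∫ f·a dμ| ≤ ‖f‖_{BMO^{r'}(μ)}. -/

import Mathlib

open MeasureTheory Metric Set ENNReal

variable {M : Type*} [MetricSpace M] [MeasurableSpace M]

/-- A `(1,r)`-atom at scale `b`: a function supported in a ball `B` of radius at most
`b`, with vanishing integral and `‖a‖_{L^r} ≤ μ(B)^{1/r}·μ(B)⁻¹` (for `r = ∞` this is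
`‖a‖_∞ ≤ μ(B)⁻¹`). -/
def IsAtomOn (μ : MeasureTheory.Measure M) (r : ℝ≥0∞) (b : ℝ) (a : M → ℝ) : Prop :=
  ∃ (x : M) (s : ℝ), 0 < s ∧ s ≤ b ∧
    (∀ y, y ∉ Metric.ball x s → a y = 0) ∧
    MeasureTheory.Integrable a μ ∧
    (∫ y, a y ∂μ) = 0 ∧
    MeasureTheory.eLpNorm a r μ ≤
      μ (Metric.ball x s) ^ ((1 / r).toReal) * (μ (Metric.ball x s))⁻¹

/-- Membership in the atomic Hardy space `H_b^{1,r}(μ)`: `f = Σ λ_k a_k` with `(1,r)`-atoms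
`a_k` supported in balls of radius ≤ `b`, `Σ|λ_k| < ∞`, the series converging in `L¹(μ)`. -/
def InHardy (μ : MeasureTheory.Measure M) (r : ℝ≥0∞) (b : ℝ) (f : M → ℝ) : Prop :=
  ∃ (c : ℕ → ℝ) (a : ℕ → M → ℝ),
    (∀ n, IsAtomOn μ r b (a n)) ∧ Summable (fun n => |c n|) ∧
    Filter.Tendsto
      (fun N => ∫ x, |f x - ∑ n ∈ Finset.range N, c n * a n x| ∂μ)
      Filter.atTop (nhds 0)

/-- The atomic Hardy norm `‖f‖_{H_b^{1,r}(μ)}`: the infimum of `Σ|λ_k|` over all atomic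
decompositions of `f`. -/
noncomputable def hardyNorm (μ : MeasureTheory.Measure M) (r : ℝ≥0∞) (b : ℝ)
    (f : M → ℝ) : ℝ :=
  sInf {t : ℝ | ∃ (c : ℕ → ℝ) (a : ℕ → M → ℝ),
    (∀ n, IsAtomOn μ r b (a n)) ∧ Summable (fun n => |c n|) ∧
    Filter.Tendsto
      (fun N => ∫ x, |f x - ∑ n ∈ Finset.range N, c n * a n x| ∂μ)
      Filter.atTop (nhds 0) ∧
    (∑' n, |c n|) = t}

/-- `K` bounds the mean `q`-oscillation of `f` over all balls of radius `≤ b`. -/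
def OscBound (μ : MeasureTheory.Measure M) (q b : ℝ) (f : M → ℝ) (K : ℝ) : Prop :=
  ∀ (x : M) (s : ℝ), 0 < s → s ≤ b →
    (∫⁻ y in Metric.ball x s,
        ENNReal.ofReal (|f y - ⨍ z in Metric.ball x s, f z ∂μ| ^ q) ∂μ)
      ≤ ENNReal.ofReal (K ^ q) * μ (Metric.ball x s)

/-- Membership in `BMO_b^q(μ)`. -/
def MemBMO (μ : MeasureTheory.Measure M) (q b : ℝ) (f : M → ℝ) : Prop :=
  MeasureTheory.LocallyIntegrable f μ ∧ ∃ K : ℝ, 0 ≤ K ∧ OscBound μ q b f K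

/-- The `BMO_b^q(μ)` norm `N_b^q(f)`. -/
noncomputable def bmoNorm (μ : MeasureTheory.Measure M) (q b : ℝ) (f : M → ℝ) : ℝ :=
  sInf {K : ℝ | 0 ≤ K ∧ OscBound μ q b f K}


/-! ### Auxiliary lemmas -/

noncomputable def myTrunc (m t : ℝ) : ℝ := max (min t m) (-m)

lemma myTrunc_abs_le {m : ℝ} (hm : 0 ≤ m) (t : ℝ) : |myTrunc m t| ≤ m := by
  rw [abs_le]
  exact ⟨le_max_right _ _, max_le (min_le_right _ _) (by linarith)⟩

lemma myTrunc_abs_le' {m : ℝ} (hm : 0 ≤ m) (t : ℝ) : |myTrunc m t| ≤ |t| := by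
  rcases le_total 0 t with h | h
  · have h0 : (0:ℝ) ≤ min t m := le_min h hm
    have he : myTrunc m t = min t m := max_eq_left (le_trans (neg_nonpos.2 hm) h0)
    rw [he, abs_of_nonneg h0, abs_of_nonneg h]
    exact min_le_left _ _
  · have h1 : min t m = t := min_eq_left (le_trans h hm)
    rw [myTrunc, h1, abs_of_nonpos (max_le h (neg_nonpos.2 hm)), abs_of_nonpos h]
    exact neg_le_neg (le_max_left _ _)

lemma myTrunc_lip (m a b : ℝ) : |myTrunc m a - myTrunc m b| ≤ |a - b| := by
  refine (abs_max_sub_max_le_abs _ _ _).trans ?_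
  refine (abs_min_sub_min_le_max a m b m).trans ?_
  simp

lemma myTrunc_eq {m t : ℝ} (h : |t| ≤ m) : myTrunc m t = t := by
  rw [abs_le] at h
  rw [myTrunc, min_eq_left h.2]
  exact max_eq_left h.1

lemma myTrunc_zero {m : ℝ} (hm : 0 ≤ m) : myTrunc m 0 = 0 :=
  myTrunc_eq (by simpa using hm)

/-- If `u * v` and `v` are a.e. strongly measurable, then `u` is a.e. measurable on a
measurable set carrying (a.e.) the support of `v`. -/
lemma aemeasurable_restrict_support {M : Type*} [MeasurableSpace M] {μ : Measure M}
    {u v : M → ℝ} (huv : AEStronglyMeasurable (fun x => u x * v x) μ)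
    (hv : AEStronglyMeasurable v μ) :
    ∃ W : Set M, MeasurableSet W ∧ (∀ᵐ x ∂μ, v x ≠ 0 → x ∈ W) ∧
      AEMeasurable u (μ.restrict W) := by
  set P := hv.mk v with hPdef
  have hP : StronglyMeasurable P := hv.stronglyMeasurable_mk
  have hvP : v =ᵐ[μ] P := hv.ae_eq_mk
  set Q := huv.mk _ with hQdef
  have hQ : StronglyMeasurable Q := huv.stronglyMeasurable_mk
  have hQe : (fun x => u x * v x) =ᵐ[μ] Q := huv.ae_eq_mk
  have hWm : MeasurableSet {x | P x ≠ 0} := by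
    have : {x | P x ≠ 0} = P ⁻¹' ({0}ᶜ) := rfl
    rw [this]
    exact hP.measurable (measurableSet_singleton 0).compl
  refine ⟨{x | P x ≠ 0}, hWm, ?_, ?_⟩
  · filter_upwards [hvP] with x hx hvx
    show P x ≠ 0
    rw [← hx]
    exact hvx
  · refine AEMeasurable.congr (f := fun x => Q x / P x)
      ((hQ.measurable.div hP.measurable).aemeasurable) ?_
    have h1 : ∀ᵐ x ∂μ.restrict {x | P x ≠ 0}, v x = P x := ae_restrict_of_ae hvP
    have h2 : ∀ᵐ x ∂μ.restrict {x | P x ≠ 0}, u x * v x = Q x := ae_restrict_of_ae hQe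
    have h3 : ∀ᵐ x ∂μ.restrict {x | P x ≠ 0}, x ∈ {x | P x ≠ 0} := ae_restrict_mem hWm
    filter_upwards [h1, h2, h3] with x e1 e2 e3
    have hvx : v x ≠ 0 := by rw [e1]; exact e3
    rw [← e2, ← e1]
    exact mul_div_cancel_right₀ (u x) hvx

/-- Core estimate: the pairing of a bounded-oscillation function with an atom. -/
lemma pairing_core {M : Type*} [MetricSpace M] [MeasurableSpace M] [BorelSpace M]
    (μ : Measure M)
    (hballs : ∀ (x : M) (rr : ℝ), μ (Metric.ball x rr) < ⊤)
    {r : ℝ} (hr : 1 < r) {K : ℝ} (hK : 0 ≤ K)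
    {a h φ : M → ℝ} {x : M} {s : ℝ} {c₀ : ℝ}
    (hsupp : ∀ y, y ∉ Metric.ball x s → a y = 0)
    (haint : Integrable a μ)
    (hzero : (∫ y, a y ∂μ) = 0)
    (hnorm : eLpNorm a (ENNReal.ofReal r) μ ≤
      μ (Metric.ball x s) ^ ((1 / ENNReal.ofReal r).toReal) * (μ (Metric.ball x s))⁻¹)
    (hprod : Integrable (fun y => h y * a y) μ)
    (hpt : ∀ᵐ y ∂μ, |h y - c₀| * |a y| ≤ |φ y| * |a y|)
    (hosc : (∫⁻ y in Metric.ball x s, ENNReal.ofReal (|φ y| ^ (r / (r - 1))) ∂μ)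
      ≤ ENNReal.ofReal (K ^ (r / (r - 1))) * μ (Metric.ball x s)) :
    |∫ y, h y * a y ∂μ| ≤ K := by
  have hr0 : (0:ℝ) < r := by linarith
  have hq : (r / (r - 1)).HolderConjugate r := (Real.HolderConjugate.conjExponent hr).symm
  set q : ℝ := r / (r - 1) with hqdef
  have hq0 : (0:ℝ) < q := hq.pos
  have hsum1 : 1 / q + 1 / r = 1 := by
    have := hq.inv_add_inv_eq_one
    rw [one_div, one_div]
    exact this
  set B := Metric.ball x s with hBdef
  set F : M → ℝ := fun y => h y - c₀ with hFdef
  have hFaint : Integrable (fun y => F y * a y) μ := by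
    have he : (fun y => F y * a y) = fun y => h y * a y - c₀ * a y := by
      funext y; rw [hFdef]; ring
    rw [he]
    exact hprod.sub (haint.const_mul c₀)
  have step1 : ∫ y, h y * a y ∂μ = ∫ y, F y * a y ∂μ := by
    have he : (fun y => F y * a y) = fun y => h y * a y - c₀ * a y := by
      funext y; rw [hFdef]; ring
    rw [he, integral_sub hprod (haint.const_mul c₀), integral_const_mul, hzero,
      mul_zero, sub_zero]
  have step2 : |∫ y, F y * a y ∂μ| ≤ (∫⁻ y, ENNReal.ofReal ‖F y * a y‖ ∂μ).toReal := by
    have := norm_integral_le_lintegral_norm (μ := μ) (fun y => F y * a y)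
    rwa [Real.norm_eq_abs] at this
  have step3 : ∫⁻ y, ENNReal.ofReal ‖F y * a y‖ ∂μ
      = ∫⁻ y in B, ENNReal.ofReal ‖F y * a y‖ ∂μ := by
    rw [← lintegral_indicator Metric.isOpen_ball.measurableSet]
    refine lintegral_congr fun y => ?_
    by_cases hy : y ∈ B
    · rw [Set.indicator_of_mem hy]
    · rw [Set.indicator_of_notMem hy, hsupp y hy, mul_zero]
      simp
  set G : M → ℝ≥0∞ := fun y => (‖F y * a y‖₊ : ℝ≥0∞) * (‖a y‖₊ : ℝ≥0∞)⁻¹ with hGdef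
  have hGmeas : AEMeasurable G (μ.restrict B) :=
    (hFaint.aestronglyMeasurable.restrict.enorm).mul
      (haint.aestronglyMeasurable.restrict.enorm.inv)
  have hGeq : ∀ y, ENNReal.ofReal ‖F y * a y‖ = G y * (‖a y‖₊ : ℝ≥0∞) := by
    intro y
    rw [ofReal_norm, enorm_eq_nnnorm]
    by_cases hay : a y = 0
    · simp [hGdef, hay]
    · have h0 : (‖a y‖₊ : ℝ≥0∞) ≠ 0 := by simpa using hay
      have htop : (‖a y‖₊ : ℝ≥0∞) ≠ ⊤ := ENNReal.coe_ne_top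
      rw [hGdef]
      show (‖F y * a y‖₊ : ℝ≥0∞) = (‖F y * a y‖₊ : ℝ≥0∞) * (‖a y‖₊ : ℝ≥0∞)⁻¹ * ‖a y‖₊
      rw [mul_assoc, ENNReal.inv_mul_cancel h0 htop, mul_one]
  have hGle : ∀ᵐ y ∂μ, G y ≤ ENNReal.ofReal |φ y| := by
    filter_upwards [hpt] with y hy
    by_cases hay : a y = 0
    · have : F y * a y = 0 := by rw [hay, mul_zero]
      simp only [hGdef, this, nnnorm_zero, ENNReal.coe_zero, zero_mul]
      exact zero_le
    · have h0 : (‖a y‖₊ : ℝ≥0∞) ≠ 0 := by simpa using hay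
      have htop : (‖a y‖₊ : ℝ≥0∞) ≠ ⊤ := ENNReal.coe_ne_top
      have h1 : |F y| ≤ |φ y| :=
        le_of_mul_le_mul_right (by exact hy) (abs_pos.2 hay)
      have h2 : G y = (‖F y‖₊ : ℝ≥0∞) := by
        rw [hGdef]
        show (‖F y * a y‖₊ : ℝ≥0∞) * (‖a y‖₊ : ℝ≥0∞)⁻¹ = ‖F y‖₊
        rw [nnnorm_mul, ENNReal.coe_mul, mul_assoc, ENNReal.mul_inv_cancel h0 htop, mul_one]
      rw [h2, ← enorm_eq_nnnorm, ← ofReal_norm, Real.norm_eq_abs]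
      exact ENNReal.ofReal_le_ofReal h1
  have holder : ∫⁻ y in B, ENNReal.ofReal ‖F y * a y‖ ∂μ
      ≤ (∫⁻ y in B, G y ^ q ∂μ) ^ (1/q)
        * (∫⁻ y in B, (‖a y‖₊ : ℝ≥0∞) ^ r ∂μ) ^ (1/r) := by
    have hmeas2 : AEMeasurable (fun y => (‖a y‖₊ : ℝ≥0∞)) (μ.restrict B) :=
      haint.aestronglyMeasurable.restrict.enorm
    have h := ENNReal.lintegral_mul_le_Lp_mul_Lq (μ.restrict B) hq hGmeas hmeas2
    simp only [Pi.mul_apply] at h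
    refine le_trans (le_of_eq (lintegral_congr fun y => hGeq y)) h
  have bound1 : (∫⁻ y in B, G y ^ q ∂μ) ≤ ENNReal.ofReal (K ^ q) * μ B := by
    refine le_trans (lintegral_mono_ae ?_) hosc
    filter_upwards [ae_restrict_of_ae hGle] with y hy
    calc G y ^ q ≤ ENNReal.ofReal |φ y| ^ q := ENNReal.rpow_le_rpow hy hq0.le
      _ = ENNReal.ofReal (|φ y| ^ q) :=
          ENNReal.ofReal_rpow_of_nonneg (abs_nonneg _) hq0.le
  have hexp : (1 / ENNReal.ofReal r).toReal = 1 / r := by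
    rw [one_div, ENNReal.toReal_inv, ENNReal.toReal_ofReal hr0.le, one_div]
  have bound2 : (∫⁻ y in B, (‖a y‖₊ : ℝ≥0∞) ^ r ∂μ) ^ (1/r)
      ≤ μ B ^ (1/r) * (μ B)⁻¹ := by
    have h1 : (∫⁻ y in B, (‖a y‖₊ : ℝ≥0∞) ^ r ∂μ)
        ≤ ∫⁻ y, (‖a y‖₊ : ℝ≥0∞) ^ r ∂μ := setLIntegral_le_lintegral _ _
    have h2 : eLpNorm a (ENNReal.ofReal r) μ
        = (∫⁻ y, (‖a y‖₊ : ℝ≥0∞) ^ r ∂μ) ^ (1/r) := by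
      rw [eLpNorm_eq_lintegral_rpow_enorm_toReal (by simp [hr0]) (by simp),
        ENNReal.toReal_ofReal hr0.le]
      rfl
    calc (∫⁻ y in B, (‖a y‖₊ : ℝ≥0∞) ^ r ∂μ) ^ (1/r)
        ≤ (∫⁻ y, (‖a y‖₊ : ℝ≥0∞) ^ r ∂μ) ^ (1/r) :=
          ENNReal.rpow_le_rpow h1 (by positivity)
      _ = eLpNorm a (ENNReal.ofReal r) μ := h2.symm
      _ ≤ μ B ^ ((1 / ENNReal.ofReal r).toReal) * (μ B)⁻¹ := hnorm
      _ = μ B ^ (1/r) * (μ B)⁻¹ := by rw [hexp]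
  have hKpart : (ENNReal.ofReal (K ^ q) * μ B) ^ (1/q)
      = ENNReal.ofReal K * μ B ^ (1/q) := by
    rw [ENNReal.mul_rpow_of_nonneg _ _ (by positivity : (0:ℝ) ≤ 1/q),
      ← ENNReal.ofReal_rpow_of_nonneg hK hq0.le, ← ENNReal.rpow_mul,
      mul_one_div_cancel hq0.ne', ENNReal.rpow_one]
  have hμpart : μ B ^ (1/q) * (μ B ^ (1/r) * (μ B)⁻¹) ≤ 1 := by
    rcases eq_or_ne (μ B) 0 with h0 | h0
    · rw [h0, ENNReal.zero_rpow_of_pos (by positivity)]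
      simp
    · have hne : μ B ≠ ⊤ := (hballs x s).ne
      rw [← mul_assoc, ← ENNReal.rpow_add _ _ h0 hne, hsum1, ENNReal.rpow_one,
        ENNReal.mul_inv_cancel h0 hne]
  have chain : ∫⁻ y, ENNReal.ofReal ‖F y * a y‖ ∂μ ≤ ENNReal.ofReal K := by
    calc ∫⁻ y, ENNReal.ofReal ‖F y * a y‖ ∂μ
        = ∫⁻ y in B, ENNReal.ofReal ‖F y * a y‖ ∂μ := step3
      _ ≤ (∫⁻ y in B, G y ^ q ∂μ) ^ (1/q)
          * (∫⁻ y in B, (‖a y‖₊ : ℝ≥0∞) ^ r ∂μ) ^ (1/r) := holder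
      _ ≤ (ENNReal.ofReal (K ^ q) * μ B) ^ (1/q) * (μ B ^ (1/r) * (μ B)⁻¹) :=
          mul_le_mul' (ENNReal.rpow_le_rpow bound1 (by positivity)) bound2
      _ = ENNReal.ofReal K * (μ B ^ (1/q) * (μ B ^ (1/r) * (μ B)⁻¹)) := by
          rw [hKpart, mul_assoc]
      _ ≤ ENNReal.ofReal K * 1 := mul_le_mul_right hμpart _
      _ = ENNReal.ofReal K := mul_one _
  rw [step1]
  exact step2.trans (ENNReal.toReal_le_of_le_ofReal hK chain)

/-- Passing from truncations to the full function in the pairing bound. -/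
lemma trunc_limit {M : Type*} [MeasurableSpace M]
    {μ : Measure M} {f g : M → ℝ}
    (hfg : Integrable (fun x => f x * g x) μ)
    (hmeas : ∀ m : ℕ, AEStronglyMeasurable (fun x => myTrunc (m : ℝ) (f x) * g x) μ)
    {C : ℝ}
    (h : ∀ m : ℕ, |∫ x, myTrunc (m : ℝ) (f x) * g x ∂μ| ≤ C) :
    |∫ x, f x * g x ∂μ| ≤ C := by
  have hT : Filter.Tendsto (fun mm : ℕ => ∫ x, myTrunc (mm : ℝ) (f x) * g x ∂μ)
      Filter.atTop (nhds (∫ x, f x * g x ∂μ)) := by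
    refine tendsto_integral_of_dominated_convergence (fun x => |f x * g x|)
      hmeas hfg.abs ?_ ?_
    · intro mm
      refine Filter.Eventually.of_forall fun x => ?_
      simp only [Real.norm_eq_abs, abs_mul]
      exact mul_le_mul_of_nonneg_right (myTrunc_abs_le' (Nat.cast_nonneg mm) _) (abs_nonneg _)
    · refine Filter.Eventually.of_forall fun x => ?_
      refine tendsto_atTop_of_eventually_const (i₀ := Nat.ceil |f x|) fun i hi => ?_
      rw [myTrunc_eq (le_trans (Nat.le_ceil _) (Nat.cast_le.2 hi))]
  exact le_of_tendsto hT.abs (Filter.Eventually.of_forall h)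

/-- (Easy direction of `H¹`–`BMO` duality.)  For
`f ∈ BMO^{r'}(μ)` with `r ∈ (1,∞)`, `1/r + 1/r' = 1`, the functional
`g ↦ ∫ f·g dμ` on finite linear combinations of `(1,r)`-atoms is bounded by
`‖f‖_{BMO^{r'}}·‖g‖_{H^{1,r}}`; in particular `|∫ f·a dμ| ≤ ‖f‖_{BMO^{r'}}` for
every `(1,r)`-atom `a`. -/
theorem bmo_pairing_bound
    {M : Type*} [MetricSpace M] [MeasurableSpace M] [BorelSpace M]
    (μ : Measure M)
    (hballs : ∀ (x : M) (r : ℝ), μ (Metric.ball x r) < ⊤)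
    (b₀ : ℝ) (hb₀ : 0 < b₀)
    (r : ℝ) (hr : 1 < r)
    (f : M → ℝ) (hf : MemBMO μ (r / (r - 1)) b₀ f) :
    (∀ a : M → ℝ, IsAtomOn μ (ENNReal.ofReal r) b₀ a →
        |∫ x, f x * a x ∂μ| ≤ bmoNorm μ (r / (r - 1)) b₀ f) ∧
    (∀ (n : ℕ) (lam : ℕ → ℝ) (a : ℕ → M → ℝ),
        (∀ j, j < n → IsAtomOn μ (ENNReal.ofReal r) b₀ (a j)) →
        |∫ x, f x * (∑ j ∈ Finset.range n, lam j * a j x) ∂μ|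
          ≤ bmoNorm μ (r / (r - 1)) b₀ f *
              hardyNorm μ (ENNReal.ofReal r) b₀
                (fun x => ∑ j ∈ Finset.range n, lam j * a j x)) := by
  classical
  obtain ⟨hfl, K₀, hK₀0, hosc₀⟩ := hf
  have hbmo_nonneg : 0 ≤ bmoNorm μ (r / (r - 1)) b₀ f :=
    Real.sInf_nonneg fun K hK => hK.1
  constructor
  · -- Part 1: single atoms
    intro a ha
    obtain ⟨x, s, hs, hsb, hsupp, haint, hzero, hnorm⟩ := ha
    by_cases hfa : Integrable (fun y => f y * a y) μ
    · obtain ⟨W, hWm, hWsupp, hfW⟩ :=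
        aemeasurable_restrict_support hfa.aestronglyMeasurable haint.aestronglyMeasurable
      have hcore : ∀ m : ℕ,
          AEStronglyMeasurable (fun y => myTrunc (m : ℝ) (f y) * a y) μ ∧
          (∀ K : ℝ, 0 ≤ K → OscBound μ (r / (r - 1)) b₀ f K →
            |∫ y, myTrunc (m : ℝ) (f y) * a y ∂μ| ≤ K) := by
        intro m
        set h_ : M → ℝ := W.indicator (fun y => myTrunc (m : ℝ) (f y)) with hh_
        have hTmU : AEStronglyMeasurable (fun y => myTrunc (m : ℝ) (f y)) (μ.restrict W) :=
          ((hfW.min aemeasurable_const).max aemeasurable_const).aestronglyMeasurable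
        have hhmeas : AEStronglyMeasurable h_ μ :=
          (aestronglyMeasurable_indicator_iff hWm).2 hTmU
        have hhbd : ∀ y, ‖h_ y‖ ≤ (m : ℝ) := by
          intro y
          rw [Real.norm_eq_abs, hh_]
          by_cases hy : y ∈ W
          · rw [Set.indicator_of_mem hy]
            exact myTrunc_abs_le (Nat.cast_nonneg m) _
          · rw [Set.indicator_of_notMem hy, abs_zero]
            exact Nat.cast_nonneg m
        have hprod : Integrable (fun y => h_ y * a y) μ :=
          haint.bdd_mul (c := m) hhmeas (Filter.Eventually.of_forall hhbd)
        have hae : (fun y => h_ y * a y) =ᵐ[μ] fun y => myTrunc (m : ℝ) (f y) * a y := by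
          filter_upwards [hWsupp] with y hy
          by_cases hay : a y = 0
          · rw [hay, mul_zero, mul_zero]
          · rw [hh_, Set.indicator_of_mem (hy hay)]
        constructor
        · exact hprod.aestronglyMeasurable.congr hae
        · intro K hK hosc
          rw [← integral_congr_ae hae]
          refine pairing_core (φ := fun y => f y - ⨍ z in Metric.ball x s, f z ∂μ)
            (c₀ := myTrunc (m : ℝ) (⨍ z in Metric.ball x s, f z ∂μ))
            μ hballs hr hK hsupp haint hzero hnorm hprod ?_ (hosc x s hs hsb)
          filter_upwards [hWsupp] with y hy
          by_cases hay : a y = 0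
          · rw [hay, abs_zero, mul_zero, mul_zero]
          · rw [hh_, Set.indicator_of_mem (hy hay)]
            exact mul_le_mul_of_nonneg_right (myTrunc_lip _ _ _) (abs_nonneg _)
      unfold bmoNorm
      refine le_csInf ⟨K₀, hK₀0, hosc₀⟩ fun K hK => ?_
      exact trunc_limit hfa (fun m => (hcore m).1)
        (fun m => (hcore m).2 K hK.1 hK.2)
    · rw [integral_undef hfa]
      simpa using hbmo_nonneg
  · -- Part 2: finite linear combinations
    intro n lam a hat
    rcases isEmpty_or_nonempty M with hM | hM
    · rw [integral_of_isEmpty, abs_zero]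
      refine mul_nonneg hbmo_nonneg (Real.sInf_nonneg ?_)
      rintro t ⟨c, A, -, -, -, hteq⟩
      exact hteq ▸ tsum_nonneg fun k => abs_nonneg _
    · set g : M → ℝ := fun x => ∑ j ∈ Finset.range n, lam j * a j x with hg
      show |∫ x, f x * g x ∂μ| ≤
        bmoNorm μ (r / (r - 1)) b₀ f * hardyNorm μ (ENNReal.ofReal r) b₀ g
      have hajint : ∀ j, j < n → Integrable (a j) μ := fun j hj => by
        obtain ⟨x, s, _, _, _, hi, _, _⟩ := hat j hj
        exact hi
      have hgint : Integrable g μ := by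
        rw [hg]
        exact integrable_finset_sum _ fun j hj =>
          (hajint j (Finset.mem_range.1 hj)).const_mul _
      obtain ⟨x₀⟩ := hM
      have hzatom : IsAtomOn μ (ENNReal.ofReal r) b₀ (fun _ : M => (0:ℝ)) := by
        refine ⟨x₀, b₀, hb₀, le_refl _, fun _ _ => rfl, integrable_zero _ _ _,
          integral_zero _ _, ?_⟩
        rw [eLpNorm_zero']
        exact zero_le
      set SS : Set ℝ := {t : ℝ | ∃ (c : ℕ → ℝ) (A : ℕ → M → ℝ),
        (∀ k, IsAtomOn μ (ENNReal.ofReal r) b₀ (A k)) ∧ Summable (fun k => |c k|) ∧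
        Filter.Tendsto (fun N => ∫ x, |g x - ∑ k ∈ Finset.range N, c k * A k x| ∂μ)
          Filter.atTop (nhds 0) ∧ (∑' k, |c k|) = t} with hSS
      have hHN : hardyNorm μ (ENNReal.ofReal r) b₀ g = sInf SS := rfl
      have hSSpos : ∀ t ∈ SS, 0 ≤ t := by
        rintro t ⟨c, A, -, -, -, hteq⟩
        exact hteq ▸ tsum_nonneg fun k => abs_nonneg _
      have hSSne : SS.Nonempty := by
        refine ⟨∑' k, |if k < n then lam k else 0|, fun k => if k < n then lam k else 0,
          fun k => if k < n then a k else fun _ => 0, fun k => ?_, ?_, ?_, rfl⟩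
        · by_cases h : k < n
          · simpa [h] using hat k h
          · simpa [h] using hzatom
        · refine summable_of_ne_finset_zero (s := Finset.range n) fun k hk => ?_
          rw [Finset.mem_range] at hk
          simp [hk]
        · refine tendsto_atTop_of_eventually_const (i₀ := n) fun N hN => ?_
          have hzero : ∀ xx : M, g xx - ∑ k ∈ Finset.range N,
              (if k < n then lam k else 0) * (if k < n then a k else fun _ => (0:ℝ)) xx = 0 := by
            intro xx
            rw [sub_eq_zero]
            refine Eq.symm ?_
            calc ∑ k ∈ Finset.range N,
                  (if k < n then lam k else 0) * (if k < n then a k else fun _ => (0:ℝ)) xx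
                = ∑ k ∈ Finset.range n,
                  (if k < n then lam k else 0) * (if k < n then a k else fun _ => (0:ℝ)) xx := by
                  refine (Finset.sum_subset (Finset.range_subset_range.2 hN) ?_).symm
                  intro k _ hk
                  rw [Finset.mem_range] at hk
                  rw [if_neg hk, zero_mul]
              _ = ∑ k ∈ Finset.range n, lam k * a k xx := by
                  refine Finset.sum_congr rfl fun k hk => ?_
                  rw [Finset.mem_range] at hk
                  rw [if_pos hk, if_pos hk]
              _ = g xx := rfl
          simp only [hzero, abs_zero, integral_zero]
      have main : ∀ t ∈ SS, ∀ K : ℝ, 0 ≤ K → OscBound μ (r / (r - 1)) b₀ f K →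
          |∫ x, f x * g x ∂μ| ≤ K * t := by
        rintro t ⟨c, A, hA, hsm, htd, hteq⟩ K hK hosc
        have ht0 : 0 ≤ t := hteq ▸ tsum_nonneg fun k => abs_nonneg _
        by_cases hfg : Integrable (fun x => f x * g x) μ
        swap
        · rw [integral_undef hfg]
          simpa using mul_nonneg hK ht0
        choose xk sk hsk hskb hsuppk hAint hzerok hnormk using hA
        -- measurable essential supports of the atoms
        have hEex : ∀ k, ∃ E : Set M, MeasurableSet E ∧ E ⊆ Metric.ball (xk k) (sk k) ∧
            (∀ᵐ y ∂μ, A k y ≠ 0 → y ∈ E) := by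
          intro k
          have hm := (hAint k).aestronglyMeasurable
          refine ⟨{y | hm.mk (A k) y ≠ 0} ∩ Metric.ball (xk k) (sk k),
            ?_, Set.inter_subset_right, ?_⟩
          · refine MeasurableSet.inter ?_ Metric.isOpen_ball.measurableSet
            have : {y | hm.mk (A k) y ≠ 0} = hm.mk (A k) ⁻¹' ({0}ᶜ) := rfl
            rw [this]
            exact hm.stronglyMeasurable_mk.measurable (measurableSet_singleton 0).compl
          · filter_upwards [hm.ae_eq_mk] with y hy hay
            refine ⟨?_, ?_⟩
            · show hm.mk (A k) y ≠ 0
              rw [← hy]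
              exact hay
            · by_contra hball
              exact hay (hsuppk k y hball)
        choose E hEm hEsub hEsupp using hEex
        obtain ⟨W, hWm, hWsupp, hfW⟩ :=
          aemeasurable_restrict_support hfg.aestronglyMeasurable hgint.aestronglyMeasurable
        set V : ℕ → Set M :=
          fun k => if AEMeasurable f (μ.restrict (E k)) then E k else ∅ with hV
        set U : Set M := W ∪ ⋃ k, V k with hU
        have hVm : ∀ k, MeasurableSet (V k) := by
          intro k
          by_cases h : AEMeasurable f (μ.restrict (E k))
          · simpa [hV, h] using hEm k
          · simp [hV, h]
        have hUm : MeasurableSet U := hWm.union (MeasurableSet.iUnion hVm)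
        have hfU : AEMeasurable f (μ.restrict U) := by
          have h1 : AEStronglyMeasurable f (μ.restrict U) := by
            rw [hU, aestronglyMeasurable_union_iff]
            refine ⟨hfW.aestronglyMeasurable, ?_⟩
            rw [aestronglyMeasurable_iUnion_iff]
            intro k
            by_cases h : AEMeasurable f (μ.restrict (E k))
            · simp only [hV]
              rw [if_pos h]
              exact h.aestronglyMeasurable
            · simp only [hV]
              rw [if_neg h, Measure.restrict_empty]
              exact aestronglyMeasurable_zero_measure f
          exact h1.aemeasurable
        have havg0 : ∀ k, ¬ AEMeasurable f (μ.restrict (E k)) →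
            (⨍ z in Metric.ball (xk k) (sk k), f z ∂μ) = 0 := by
          intro k hk
          have hni : ¬ IntegrableOn f (Metric.ball (xk k) (sk k)) μ := by
            intro hcon
            refine hk ?_
            have h2 : μ.restrict (E k)
                = (μ.restrict (Metric.ball (xk k) (sk k))).restrict (E k) := by
              rw [Measure.restrict_restrict (hEm k),
                Set.inter_eq_self_of_subset_left (hEsub k)]
            rw [h2]
            exact hcon.aestronglyMeasurable.aemeasurable.restrict
          rw [setAverage_eq, integral_undef hni, smul_zero]
        have hcore : ∀ m : ℕ,
            AEStronglyMeasurable (fun y => myTrunc (m : ℝ) (f y) * g y) μ ∧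
            |∫ y, myTrunc (m : ℝ) (f y) * g y ∂μ| ≤ K * t := by
          intro m
          set h_ : M → ℝ := U.indicator (fun y => myTrunc (m : ℝ) (f y)) with hh_
          have hTmU : AEStronglyMeasurable (fun y => myTrunc (m : ℝ) (f y)) (μ.restrict U) :=
            ((hfU.min aemeasurable_const).max aemeasurable_const).aestronglyMeasurable
          have hhmeas : AEStronglyMeasurable h_ μ :=
            (aestronglyMeasurable_indicator_iff hUm).2 hTmU
          have hhbd : ∀ y, ‖h_ y‖ ≤ (m : ℝ) := by
            intro y
            rw [Real.norm_eq_abs, hh_]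
            by_cases hy : y ∈ U
            · rw [Set.indicator_of_mem hy]
              exact myTrunc_abs_le (Nat.cast_nonneg m) _
            · rw [Set.indicator_of_notMem hy, abs_zero]
              exact Nat.cast_nonneg m
          have hprodg : Integrable (fun y => h_ y * g y) μ :=
            hgint.bdd_mul (c := m) hhmeas (Filter.Eventually.of_forall hhbd)
          have hgae : (fun y => h_ y * g y) =ᵐ[μ] fun y => myTrunc (m : ℝ) (f y) * g y := by
            filter_upwards [hWsupp] with y hy
            by_cases hgy : g y = 0
            · rw [hgy, mul_zero, mul_zero]
            · have hyU : y ∈ U := by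
                rw [hU]
                exact Or.inl (hy hgy)
              rw [hh_, Set.indicator_of_mem hyU]
          refine ⟨hprodg.aestronglyMeasurable.congr hgae, ?_⟩
          rw [← integral_congr_ae hgae]
          -- per-atom bound
          have hatom : ∀ k, |∫ y, h_ y * A k y ∂μ| ≤ K := by
            intro k
            have hprodk : Integrable (fun y => h_ y * A k y) μ :=
              (hAint k).bdd_mul (c := m) hhmeas (Filter.Eventually.of_forall hhbd)
            refine pairing_core
              (φ := fun y => f y - ⨍ z in Metric.ball (xk k) (sk k), f z ∂μ)
              (c₀ := myTrunc (m : ℝ) (⨍ z in Metric.ball (xk k) (sk k), f z ∂μ))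
              μ hballs hr hK (hsuppk k) (hAint k) (hzerok k) (hnormk k) hprodk ?_
              (hosc (xk k) (sk k) (hsk k) (hskb k))
            by_cases hk : AEMeasurable f (μ.restrict (E k))
            · filter_upwards [hEsupp k] with y hy
              by_cases hay : A k y = 0
              · rw [hay, abs_zero, mul_zero, mul_zero]
              · have hyU : y ∈ U := by
                  rw [hU]
                  refine Or.inr (Set.mem_iUnion.2 ⟨k, ?_⟩)
                  simp only [hV]
                  rw [if_pos hk]
                  exact hy hay
                rw [hh_, Set.indicator_of_mem hyU]
                exact mul_le_mul_of_nonneg_right (myTrunc_lip _ _ _) (abs_nonneg _)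
            · have havg := havg0 k hk
              refine Filter.Eventually.of_forall fun y => ?_
              by_cases hay : A k y = 0
              · rw [hay, abs_zero, mul_zero, mul_zero]
              · refine mul_le_mul_of_nonneg_right ?_ (abs_nonneg _)
                by_cases hyU : y ∈ U
                · rw [hh_, Set.indicator_of_mem hyU]
                  exact myTrunc_lip _ _ _
                · have h5 : h_ y = 0 := by
                    rw [hh_]
                    exact Set.indicator_of_notMem hyU _
                  rw [h5, havg, myTrunc_zero (Nat.cast_nonneg m)]
                  simp
          -- linearity and limit over the series
          have hSNint : ∀ N, Integrable (fun xx => ∑ k ∈ Finset.range N, c k * A k xx) μ :=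
            fun N => integrable_finset_sum _ fun k _ => (hAint k).const_mul _
          have hb1 : ∀ N,
              |∫ xx, h_ xx * ∑ k ∈ Finset.range N, c k * A k xx ∂μ| ≤ K * t := by
            intro N
            have e1 : (fun xx => h_ xx * ∑ k ∈ Finset.range N, c k * A k xx)
                = fun xx => ∑ k ∈ Finset.range N, c k * (h_ xx * A k xx) := by
              funext xx
              rw [Finset.mul_sum]
              exact Finset.sum_congr rfl fun k _ => by ring
            rw [show (∫ xx, h_ xx * ∑ k ∈ Finset.range N, c k * A k xx ∂μ)
                = ∫ xx, ∑ k ∈ Finset.range N, c k * (h_ xx * A k xx) ∂μ from by rw [← e1]]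
            rw [integral_finset_sum _ fun k _ =>
              ((hAint k).bdd_mul (c := m) hhmeas (Filter.Eventually.of_forall hhbd)).const_mul _]
            calc |∑ k ∈ Finset.range N, ∫ xx, c k * (h_ xx * A k xx) ∂μ|
                ≤ ∑ k ∈ Finset.range N, |∫ xx, c k * (h_ xx * A k xx) ∂μ| :=
                  Finset.abs_sum_le_sum_abs _ _
              _ ≤ ∑ k ∈ Finset.range N, |c k| * K := by
                  refine Finset.sum_le_sum fun k _ => ?_
                  rw [integral_const_mul, abs_mul]
                  exact mul_le_mul_of_nonneg_left (hatom k) (abs_nonneg _)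
              _ = (∑ k ∈ Finset.range N, |c k|) * K := by rw [Finset.sum_mul]
              _ ≤ t * K := mul_le_mul_of_nonneg_right
                  (hteq ▸ Summable.sum_le_tsum _ (fun k _ => abs_nonneg _) hsm) hK
              _ = K * t := mul_comm _ _
          have hdist : ∀ N,
              dist (∫ xx, h_ xx * ∑ k ∈ Finset.range N, c k * A k xx ∂μ)
                (∫ xx, h_ xx * g xx ∂μ)
              ≤ (m : ℝ) * ∫ xx, |g xx - ∑ k ∈ Finset.range N, c k * A k xx| ∂μ := by
            intro N
            have hint1 : Integrable
                (fun xx => h_ xx * ∑ k ∈ Finset.range N, c k * A k xx) μ :=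
              (hSNint N).bdd_mul (c := m) hhmeas (Filter.Eventually.of_forall hhbd)
            rw [Real.dist_eq, ← integral_sub hint1 hprodg]
            have habs : ∀ xx : M,
                |h_ xx * (∑ k ∈ Finset.range N, c k * A k xx) - h_ xx * g xx|
                ≤ (m : ℝ) * |g xx - ∑ k ∈ Finset.range N, c k * A k xx| := by
              intro xx
              rw [← mul_sub, abs_mul, abs_sub_comm]
              refine mul_le_mul_of_nonneg_right ?_ (abs_nonneg _)
              rw [← Real.norm_eq_abs]
              exact hhbd xx
            calc |∫ xx, (h_ xx * ∑ k ∈ Finset.range N, c k * A k xx - h_ xx * g xx) ∂μ|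
                ≤ ∫ xx, |h_ xx * ∑ k ∈ Finset.range N, c k * A k xx - h_ xx * g xx| ∂μ := by
                  have := norm_integral_le_integral_norm (μ := μ)
                    (fun xx => h_ xx * ∑ k ∈ Finset.range N, c k * A k xx - h_ xx * g xx)
                  simpa [Real.norm_eq_abs] using this
              _ ≤ ∫ xx, (m : ℝ) * |g xx - ∑ k ∈ Finset.range N, c k * A k xx| ∂μ :=
                  integral_mono (hint1.sub hprodg).abs
                    (((hgint.sub (hSNint N)).abs).const_mul _) habs
              _ = (m : ℝ) * ∫ xx, |g xx - ∑ k ∈ Finset.range N, c k * A k xx| ∂μ :=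
                  integral_const_mul _ _
          have hconv : Filter.Tendsto
              (fun N => ∫ xx, h_ xx * ∑ k ∈ Finset.range N, c k * A k xx ∂μ)
              Filter.atTop (nhds (∫ xx, h_ xx * g xx ∂μ)) := by
            refine tendsto_iff_dist_tendsto_zero.2
              (squeeze_zero (fun _ => dist_nonneg) hdist ?_)
            simpa using htd.const_mul (m : ℝ)
          exact le_of_tendsto hconv.abs (Filter.Eventually.of_forall hb1)
        exact trunc_limit hfg (fun m => (hcore m).1) (fun m => (hcore m).2)
      rw [hHN]
      rcases eq_or_lt_of_le hbmo_nonneg with h0 | hpos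
      · obtain ⟨t, ht⟩ := hSSne
        have ht0 := hSSpos t ht
        rcases eq_or_lt_of_le ht0 with ht0' | htpos
        · have h1 := main t ht K₀ hK₀0 hosc₀
          rw [← ht0'] at h1
          rw [← h0]
          simpa using h1
        · have h3 : |∫ x, f x * g x ∂μ| / t ≤ bmoNorm μ (r / (r - 1)) b₀ f := by
            unfold bmoNorm
            refine le_csInf ⟨K₀, hK₀0, hosc₀⟩ fun K hK => ?_
            rw [div_le_iff₀ htpos]
            have := main t ht K hK.1 hK.2
            linarith [this]
          rw [div_le_iff₀ htpos] at h3
          rw [← h0] at h3 ⊢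
          simp only [zero_mul] at h3 ⊢
          linarith [h3]
      · have h2 : ∀ t ∈ SS, |∫ x, f x * g x ∂μ| / bmoNorm μ (r / (r - 1)) b₀ f ≤ t := by
          intro t ht
          rw [div_le_iff₀ hpos]
          have ht0 := hSSpos t ht
          rcases eq_or_lt_of_le ht0 with ht0' | htpos
          · have h1 := main t ht K₀ hK₀0 hosc₀
            rw [← ht0'] at h1 ⊢
            simpa using h1
          · have h3 : |∫ x, f x * g x ∂μ| / t ≤ bmoNorm μ (r / (r - 1)) b₀ f := by
              unfold bmoNorm
              refine le_csInf ⟨K₀, hK₀0, hosc₀⟩ fun K hK => ?_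
              rw [div_le_iff₀ htpos]
              exact main t ht K hK.1 hK.2
            rw [div_le_iff₀ htpos] at h3
            linarith [h3]
        have h4 := le_csInf hSSne h2
        rw [div_le_iff₀ hpos] at h4
        linarith [h4]
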